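/- Let D be a contractive distance on two-qubit density matrices. If c1, c3 ∈ [-1,1] satisfy |c1| = |c3|, then D(ρ(c1,0,0), ρ(0,0,0)) = D(ρ(0,0,c3), ρ(0,0,0)), where ρ(0,0,0) = I4/4 is the maximally mixed state. -/

import Mathlib

open Matrix Kronecker
open scoped ComplexOrder

noncomputable section

/-- 2×2 complex matrices (single-qubit operators). -/
abbrev Mat2 := Matrix (Fin 2) (Fin 2) ℂ

/-- 4×4 complex matrices (two-qubit operators), indexed by `Fin 2 × Fin 2`. -/
abbrev Mat4 := Matrix (Fin 2 × Fin 2) (Fin 2 × Fin 2) ℂ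

/-- Pauli matrix σ₁ (x). -/
def σ1 : Mat2 := !![0, 1; 1, 0]

/-- Pauli matrix σ₂ (y). -/
def σ2 : Mat2 := !![0, -Complex.I; Complex.I, 0]

/-- Pauli matrix σ₃ (z). -/
def σ3 : Mat2 := !![1, 0; 0, -1]

/-- The Bell-diagonal state ρ(c1,c2,c3) = (1/4)(I₄ + c1 σ₁⊗σ₁ + c2 σ₂⊗σ₂ + c3 σ₃⊗σ₃). -/
def BD (c1 c2 c3 : ℝ) : Mat4 :=
  (1 / 4 : ℂ) • ((1 : Mat4) + (c1 : ℂ) • (σ1 ⊗ₖ σ1) + (c2 : ℂ) • (σ2 ⊗ₖ σ2)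
    + (c3 : ℂ) • (σ3 ⊗ₖ σ3))

/-- A two-qubit density matrix: positive semidefinite with unit trace. -/
def IsDensityMatrix (ρ : Mat4) : Prop := ρ.PosSemidef ∧ ρ.trace = 1

/-- A CPTP map given by finitely many Kraus operators. -/
def IsCPTP (Λ : Mat4 → Mat4) : Prop :=
  ∃ (n : ℕ) (K : Fin n → Mat4),
    (∑ i, (K i)ᴴ * K i) = 1 ∧ ∀ X, Λ X = ∑ i, K i * X * (K i)ᴴ

/-- A distance `D` is contractive if it contracts under every CPTP map. -/
def Contractive (D : Mat4 → Mat4 → ℝ) : Prop :=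
  ∀ Λ : Mat4 → Mat4, IsCPTP Λ → ∀ ρ σ : Mat4,
    IsDensityMatrix ρ → IsDensityMatrix σ → D (Λ ρ) (Λ σ) ≤ D ρ σ

/-- A distance `D` is invariant under transposition. -/
def TransposeInvariant (D : Mat4 → Mat4 → ℝ) : Prop :=
  ∀ ρ σ : Mat4, IsDensityMatrix ρ → IsDensityMatrix σ → D ρᵀ σᵀ = D ρ σ

/-- A distance `D` is jointly convex. -/
def JointlyConvex (D : Mat4 → Mat4 → ℝ) : Prop :=
  ∀ q : ℝ, 0 ≤ q → q ≤ 1 → ∀ ρ σ τ ς : Mat4,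
    IsDensityMatrix ρ → IsDensityMatrix σ → IsDensityMatrix τ → IsDensityMatrix ς →
    D (q • ρ + (1 - q) • σ) (q • τ + (1 - q) • ς) ≤ q * D ρ τ + (1 - q) * D σ ς

/-- A classical-classical two-qubit state: ∑ᵢⱼ pᵢⱼ |aᵢ⟩⟨aᵢ| ⊗ |bⱼ⟩⟨bⱼ| with (pᵢⱼ) a
probability distribution and {aᵢ}, {bⱼ} orthonormal bases of ℂ². -/
def IsClassical (χ : Mat4) : Prop :=
  ∃ (p : Fin 2 → Fin 2 → ℝ) (a b : Fin 2 → Fin 2 → ℂ),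
    (∀ i j, 0 ≤ p i j) ∧ (∑ i, ∑ j, p i j = 1) ∧
    (∀ i i', ∑ k, (starRingEnd ℂ) (a i k) * a i' k = if i = i' then 1 else 0) ∧
    (∀ j j', ∑ k, (starRingEnd ℂ) (b j k) * b j' k = if j = j' then 1 else 0) ∧
    χ = ∑ i, ∑ j, (p i j : ℂ) •
      (Matrix.vecMulVec (a i) (star (a i)) ⊗ₖ Matrix.vecMulVec (b j) (star (b j)))

/-- Membership in the tetrahedron of Bell-diagonal states. -/
def InTetra (c : ℝ × ℝ × ℝ) : Prop :=
  c ∈ convexHull ℝ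
    ({((1 : ℝ), (-1 : ℝ), (1 : ℝ)), ((-1 : ℝ), (1 : ℝ), (1 : ℝ)),
      ((1 : ℝ), (1 : ℝ), (-1 : ℝ)), ((-1 : ℝ), (-1 : ℝ), (-1 : ℝ))} : Set (ℝ × ℝ × ℝ))

/-- Geometric discord: distance to the set of classical states. -/
def QD (D : Mat4 → Mat4 → ℝ) (ρ : Mat4) : ℝ :=
  sInf {x : ℝ | ∃ χ : Mat4, IsClassical χ ∧ x = D ρ χ}

/-- The Pauli matrices, indexed. -/
def pauli : Fin 3 → Mat2 := ![σ1, σ2, σ3]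


def Hd : Mat2 := !![1, 1; 1, -1]

lemma Hd_herm : Hdᴴ = Hd := by
  ext i j; fin_cases i <;> fin_cases j <;> simp [Hd]

lemma σ1_herm : σ1ᴴ = σ1 := by
  ext i j; fin_cases i <;> fin_cases j <;> simp [σ1]

lemma σ3_herm : σ3ᴴ = σ3 := by
  ext i j; fin_cases i <;> fin_cases j <;> simp [σ3]

lemma Hd_mul_Hd : Hd * Hd = (2:ℂ) • 1 := by
  simp [Hd, Matrix.mul_fin_two]
  ext i j; fin_cases i <;> fin_cases j <;> simp [Matrix.one_fin_two] <;> norm_num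

lemma Hd_σ1_Hd : Hd * σ1 * Hd = (2:ℂ) • σ3 := by
  simp [Hd, σ1, σ3, Matrix.mul_fin_two]
  norm_num

lemma σ1_sq : σ1 * σ1 = 1 := by
  simp [σ1, Matrix.mul_fin_two]
  ext i j; fin_cases i <;> fin_cases j <;> simp [Matrix.one_fin_two]

lemma σ1σ3σ1 : σ1 * σ3 * σ1 = -σ3 := by
  simp [σ1, σ3, Matrix.mul_fin_two]

lemma trace_σ1 : σ1.trace = 0 := by simp [σ1, Matrix.trace_fin_two]
lemma trace_σ3 : σ3.trace = 0 := by simp [σ3, Matrix.trace_fin_two]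

lemma kron_conjT (A B : Mat2) : (A ⊗ₖ B)ᴴ = Aᴴ ⊗ₖ Bᴴ := by
  ext i j
  simp [Matrix.conjTranspose_apply, Matrix.kroneckerMap_apply, mul_comm]

def Wm : Mat4 := (1/2 : ℂ) • (Hd ⊗ₖ Hd)

lemma Wm_herm : Wmᴴ = Wm := by
  simp [Wm, Matrix.conjTranspose_smul, kron_conjT, Hd_herm]

lemma Wm_mul_Wm : Wm * Wm = 1 := by
  rw [Wm, smul_mul_smul_comm, ← Matrix.mul_kronecker_mul, Hd_mul_Hd,
    Matrix.smul_kronecker, Matrix.kronecker_smul, Matrix.one_kronecker_one,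
    smul_smul, smul_smul]
  norm_num

lemma Wm_conj : Wm * (σ1 ⊗ₖ σ1) * Wm = σ3 ⊗ₖ σ3 := by
  rw [Wm, Matrix.smul_mul, Matrix.mul_smul, Matrix.smul_mul, smul_smul,
    ← Matrix.mul_kronecker_mul, ← Matrix.mul_kronecker_mul, Hd_σ1_Hd,
    Matrix.smul_kronecker, Matrix.kronecker_smul, smul_smul]
  norm_num [smul_smul]

def Vm : Mat4 := (σ1 ⊗ₖ (1 : Mat2)) * Wm

lemma s1k_herm : (σ1 ⊗ₖ (1 : Mat2))ᴴ = σ1 ⊗ₖ (1 : Mat2) := by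
  rw [kron_conjT, σ1_herm, Matrix.conjTranspose_one]

lemma s1k_sq : (σ1 ⊗ₖ (1 : Mat2)) * (σ1 ⊗ₖ (1 : Mat2)) = 1 := by
  rw [← Matrix.mul_kronecker_mul, σ1_sq, mul_one, Matrix.one_kronecker_one]

lemma Vm_herm_mul : Vmᴴ * Vm = 1 := by
  rw [Vm, Matrix.conjTranspose_mul, Wm_herm, s1k_herm]
  calc Wm * (σ1 ⊗ₖ (1:Mat2)) * ((σ1 ⊗ₖ (1:Mat2)) * Wm)
      = Wm * ((σ1 ⊗ₖ (1:Mat2)) * (σ1 ⊗ₖ (1:Mat2))) * Wm := by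
        simp only [mul_assoc]
    _ = 1 := by rw [s1k_sq, mul_one, Wm_mul_Wm]

lemma Vm_conj : Vm * (σ1 ⊗ₖ σ1) * Vmᴴ = -(σ3 ⊗ₖ σ3) := by
  rw [Vm, Matrix.conjTranspose_mul, Wm_herm, s1k_herm]
  calc (σ1 ⊗ₖ (1:Mat2)) * Wm * (σ1 ⊗ₖ σ1) * (Wm * (σ1 ⊗ₖ (1:Mat2)))
      = (σ1 ⊗ₖ (1:Mat2)) * (Wm * (σ1 ⊗ₖ σ1) * Wm) * (σ1 ⊗ₖ (1:Mat2)) := by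
        simp only [mul_assoc]
    _ = (σ1 ⊗ₖ (1:Mat2)) * (σ3 ⊗ₖ σ3) * (σ1 ⊗ₖ (1:Mat2)) := by rw [Wm_conj]
    _ = (σ1 * σ3 * σ1) ⊗ₖ (1 * σ3 * 1) := by
        simp only [Matrix.mul_kronecker_mul, mul_assoc]
    _ = -(σ3 ⊗ₖ σ3) := by
        rw [σ1σ3σ1, one_mul, mul_one]
        ext i j; simp [Matrix.kroneckerMap_apply]


lemma BD_x (c : ℝ) : BD c 0 0 = (1/4 : ℂ) • ((1 : Mat4) + (c : ℂ) • (σ1 ⊗ₖ σ1)) := by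
  simp [BD]

lemma BD_z (c : ℝ) : BD 0 0 c = (1/4 : ℂ) • ((1 : Mat4) + (c : ℂ) • (σ3 ⊗ₖ σ3)) := by
  simp [BD]

/-- smul of a PSD matrix by a nonneg real is PSD. -/
lemma psd_smul {M : Mat4} (hM : M.PosSemidef) {r : ℝ} (hr : 0 ≤ r) :
    ((r : ℂ) • M).PosSemidef := by
  constructor
  · have := hM.1
    rw [Matrix.IsHermitian, Matrix.conjTranspose_smul, this]
    simp [Complex.conj_ofReal]
  · intro x
    have h := hM.2 x
    exact (hM.smul (a := (r : ℂ)) (by exact_mod_cast Complex.zero_le_real.mpr hr)).2 x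

lemma psd_one_add {A : Mat4} (hA : Aᴴ = A) (hA2 : A * A = 1) :
    ((1 : Mat4) + A).PosSemidef := by
  have key : ((((Real.sqrt 2)⁻¹ : ℝ) : ℂ) • ((1 : Mat4) + A))ᴴ *
      ((((Real.sqrt 2)⁻¹ : ℝ) : ℂ) • ((1 : Mat4) + A)) = (1 : Mat4) + A := by
    rw [Matrix.conjTranspose_smul, Matrix.conjTranspose_add, Matrix.conjTranspose_one, hA,
      smul_mul_smul_comm]
    have h2 : star ((((Real.sqrt 2)⁻¹ : ℝ)) : ℂ) * ((((Real.sqrt 2)⁻¹ : ℝ)) : ℂ)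
        = (1/2 : ℂ) := by
      rw [Complex.star_def, Complex.conj_ofReal, ← Complex.ofReal_mul, ← mul_inv,
        Real.mul_self_sqrt (by norm_num : (0:ℝ) ≤ 2)]
      norm_num
    have hsq : ((1 : Mat4) + A) * ((1 : Mat4) + A) = (2 : ℂ) • ((1 : Mat4) + A) := by
      rw [mul_add, add_mul, add_mul, one_mul, mul_one, hA2]
      ext i j
      simp [Matrix.add_apply, Matrix.smul_apply]
      ring
    rw [h2, hsq, smul_smul]
    norm_num
  rw [← key]
  exact Matrix.posSemidef_conjTranspose_mul_self _

/-- Density of (1/4)(1 + a A) for suitable A. -/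
lemma density_aux {A : Mat4} (hA : Aᴴ = A) (hA2 : A * A = 1) (htr : A.trace = 0)
    {a : ℝ} (ha : a ∈ Set.Icc (-1 : ℝ) 1) :
    IsDensityMatrix ((1/4 : ℂ) • ((1 : Mat4) + (a : ℂ) • A)) := by
  obtain ⟨ha1, ha2⟩ := ha
  constructor
  · have decomp : (1/4 : ℂ) • ((1 : Mat4) + (a : ℂ) • A)
        = ((((1+a)/8 : ℝ)) : ℂ) • ((1 : Mat4) + A)
          + ((((1-a)/8 : ℝ)) : ℂ) • ((1 : Mat4) + (-A)) := by
      push_cast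
      module
    rw [decomp]
    have hA' : (-A)ᴴ = -A := by rw [Matrix.conjTranspose_neg, hA]
    have hA2' : (-A) * (-A) = 1 := by rw [neg_mul_neg, hA2]
    exact (psd_smul (psd_one_add hA hA2) (by linarith)).add
      (psd_smul (psd_one_add hA' hA2') (by linarith))
  · rw [Matrix.trace_smul, Matrix.trace_add, Matrix.trace_smul, htr, Matrix.trace_one]
    simp

lemma σ3_sq : σ3 * σ3 = 1 := by
  simp [σ3, Matrix.mul_fin_two]
  ext i j; fin_cases i <;> fin_cases j <;> simp [Matrix.one_fin_two]

lemma A1_herm : (σ1 ⊗ₖ σ1)ᴴ = σ1 ⊗ₖ σ1 := by rw [kron_conjT, σ1_herm]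
lemma A3_herm : (σ3 ⊗ₖ σ3)ᴴ = σ3 ⊗ₖ σ3 := by rw [kron_conjT, σ3_herm]
lemma A1_sq : (σ1 ⊗ₖ σ1) * (σ1 ⊗ₖ σ1) = 1 := by
  rw [← Matrix.mul_kronecker_mul, σ1_sq, Matrix.one_kronecker_one]
lemma A3_sq : (σ3 ⊗ₖ σ3) * (σ3 ⊗ₖ σ3) = 1 := by
  rw [← Matrix.mul_kronecker_mul, σ3_sq, Matrix.one_kronecker_one]
lemma A1_tr : (σ1 ⊗ₖ σ1).trace = 0 := by rw [Matrix.trace_kronecker, trace_σ1, mul_zero]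
lemma A3_tr : (σ3 ⊗ₖ σ3).trace = 0 := by rw [Matrix.trace_kronecker, trace_σ3, mul_zero]

lemma BD_zero : BD 0 0 0 = (1/4 : ℂ) • (1 : Mat4) := by simp [BD]

lemma D_conj_eq (D : Mat4 → Mat4 → ℝ) (hD : Contractive D) (U : Mat4) (hU : Uᴴ * U = 1)
    (ρ σ : Mat4) (hρ : IsDensityMatrix ρ) (hσ : IsDensityMatrix σ) :
    D (U * ρ * Uᴴ) (U * σ * Uᴴ) = D ρ σ := by
  have hU' : U * Uᴴ = 1 := mul_eq_one_comm.mp hU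
  have cptp : ∀ V : Mat4, Vᴴ * V = 1 → IsCPTP (fun X => V * X * Vᴴ) := by
    intro V hV
    exact ⟨1, fun _ => V, by simpa using hV, fun X => by simp⟩
  have dens : ∀ (V : Mat4), Vᴴ * V = 1 → ∀ τ, IsDensityMatrix τ →
      IsDensityMatrix (V * τ * Vᴴ) := by
    intro V hV τ hτ
    refine ⟨hτ.1.mul_mul_conjTranspose_same V, ?_⟩
    rw [Matrix.trace_mul_cycle, hV, one_mul, hτ.2]
  have le1 := hD _ (cptp U hU) ρ σ hρ hσ
  have le2 := hD _ (cptp Uᴴ (by rw [Matrix.conjTranspose_conjTranspose]; exact hU'))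
    _ _ (dens U hU ρ hρ) (dens U hU σ hσ)
  have hred : ∀ τ : Mat4, Uᴴ * (U * τ * Uᴴ) * Uᴴᴴ = τ := by
    intro τ
    rw [Matrix.conjTranspose_conjTranspose,
      show Uᴴ * (U * τ * Uᴴ) * U = (Uᴴ * U) * τ * (Uᴴ * U) from by simp only [mul_assoc],
      hU, one_mul, mul_one]
  rw [hred ρ, hred σ] at le2
  exact le_antisymm le1 le2

lemma conj_BD_form (U : Mat4) (hUU : U * Uᴴ = 1) {A B : Mat4} (hA : U * A * Uᴴ = B) (c : ℝ) :
    U * ((1/4 : ℂ) • ((1 : Mat4) + (c : ℂ) • A)) * Uᴴ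
      = (1/4 : ℂ) • ((1 : Mat4) + (c : ℂ) • B) := by
  rw [Matrix.mul_smul, Matrix.smul_mul, Matrix.mul_add, Matrix.add_mul, Matrix.mul_one, hUU,
    Matrix.mul_smul, Matrix.smul_mul, hA]

lemma conj_BD_zero (U : Mat4) (hUU : U * Uᴴ = 1) : U * BD 0 0 0 * Uᴴ = BD 0 0 0 := by
  rw [BD_zero, Matrix.mul_smul, Matrix.smul_mul, Matrix.mul_one, hUU]


/-- if |c1| = |c3| then ρ(c1,0,0) and ρ(0,0,c3) are equidistant from the
maximally mixed state. -/
theorem equidistant_from_maximally_mixed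
    (D : Mat4 → Mat4 → ℝ) (hD : Contractive D)
    (c1 c3 : ℝ) (hc1 : c1 ∈ Set.Icc (-1 : ℝ) 1) (hc3 : c3 ∈ Set.Icc (-1 : ℝ) 1)
    (h : |c1| = |c3|) :
    D (BD c1 0 0) (BD 0 0 0) = D (BD 0 0 c3) (BD 0 0 0) := by
  have hd1 : IsDensityMatrix (BD c1 0 0) := by
    rw [BD_x]; exact density_aux A1_herm A1_sq A1_tr hc1
  have hd0 : IsDensityMatrix (BD 0 0 0) := by
    rw [BD_x 0]
    exact density_aux A1_herm A1_sq A1_tr (by constructor <;> norm_num)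
  rcases abs_eq_abs.mp h with h' | h'
  · -- c1 = c3 : use Wm
    have hWU : Wmᴴ * Wm = 1 := by rw [Wm_herm]; exact Wm_mul_Wm
    have hWU' : Wm * Wmᴴ = 1 := by rw [Wm_herm]; exact Wm_mul_Wm
    have hWA : Wm * (σ1 ⊗ₖ σ1) * Wmᴴ = σ3 ⊗ₖ σ3 := by rw [Wm_herm]; exact Wm_conj
    have e1 : Wm * BD c1 0 0 * Wmᴴ = BD 0 0 c3 := by
      rw [BD_x, BD_z, ← h']
      exact conj_BD_form Wm hWU' hWA c1
    have := D_conj_eq D hD Wm hWU (BD c1 0 0) (BD 0 0 0) hd1 hd0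
    rw [e1, conj_BD_zero Wm hWU'] at this
    exact this.symm
  · -- c1 = -c3 : use Vm
    have hVU : Vmᴴ * Vm = 1 := Vm_herm_mul
    have hVU' : Vm * Vmᴴ = 1 := mul_eq_one_comm.mp Vm_herm_mul
    have e1 : Vm * BD c1 0 0 * Vmᴴ = BD 0 0 c3 := by
      rw [BD_x, BD_z, conj_BD_form Vm hVU' Vm_conj c1]
      congr 1
      congr 1
      rw [smul_neg, ← neg_smul]
      congr 1
      rw [h']
      push_cast
      ring
    have := D_conj_eq D hD Vm hVU (BD c1 0 0) (BD 0 0 0) hd1 hd0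
    rw [e1, conj_BD_zero Vm hVU'] at this
    exact this.symm
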